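/- Let R be a commutative ring and x_1, ..., x_n a regular sequence generating an ideal I. Then for every k, the k-th graded piece I^k/I^{k+1} of the I-adic filtration is a free R/I-module, isomorphic to the degree-k part of the polynomial ring (R/I)[X_1, ..., X_n] via the map sending X_i to the class of x_i; in other words, a regular sequence is quasi-regular. -/

import Mathlib

/-- The ideal generated by `x j` for `j < i`. -/
def prevIdeal {R : Type*} [CommRing R] {n : ℕ} (x : Fin n → R) (i : Fin n) : Ideal R :=
  Ideal.span {y | ∃ j : Fin n, j < i ∧ x j = y}

/-- `x` is a regular sequence: each `x i` is a non-zero-divisor modulo the previous ones. -/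
def IsRegularSeq {R : Type*} [CommRing R] {n : ℕ} (x : Fin n → R) : Prop :=
  ∀ i : Fin n, ∀ r : R, x i * r ∈ prevIdeal x i → r ∈ prevIdeal x i

namespace QuasiRegAux

open MvPolynomial

variable {R : Type*} [CommRing R] {n : ℕ}

/-- The ideal generated by the first `j` elements of the sequence. -/
def Jd (x : Fin n → R) (j : ℕ) : Ideal R :=
  Ideal.span {y | ∃ i : Fin n, (i : ℕ) < j ∧ x i = y}

/-- The polynomial only uses variables with index `< j`. -/
def UsesLt (j : ℕ) (P : MvPolynomial (Fin n) R) : Prop :=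
  ∀ m : Fin n →₀ ℕ, MvPolynomial.coeff m P ≠ 0 → ∀ i : Fin n, j ≤ (i : ℕ) → m i = 0

lemma hom_iff {P : MvPolynomial (Fin n) R} {k : ℕ} :
    P.IsHomogeneous k ↔ ∀ m : Fin n →₀ ℕ, MvPolynomial.coeff m P ≠ 0 → ∑ i, m i = k := by
  have hdeg : ∀ m : Fin n →₀ ℕ, Finsupp.degree m = ∑ i, m i := fun m =>
    Finset.sum_subset (Finset.subset_univ _) fun i _ hi => Finsupp.notMem_support_iff.mp hi
  have hw : ∀ m : Fin n →₀ ℕ, (Finsupp.weight 1) m = ∑ i, m i := fun m => by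
    rw [← hdeg]; exact (DFunLike.congr_fun (Finsupp.degree_eq_weight_one (R := ℕ)) m).symm
  constructor
  · intro h m hm
    rw [← hw m]
    exact h hm
  · intro h d hd
    rw [hw d]
    exact h d hd

lemma mem_Jd (x : Fin n → R) {j : ℕ} {i : Fin n} (hi : (i : ℕ) < j) : x i ∈ Jd x j := by
  unfold Jd
  exact Ideal.subset_span ⟨i, hi, rfl⟩

lemma prod_mem (x : Fin n → R) (j : ℕ) (m : Fin n →₀ ℕ)
    (hm : ∀ i : Fin n, j ≤ (i : ℕ) → m i = 0) :
    (∏ i, x i ^ m i) ∈ Jd x j ^ (∑ i, m i) := by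
  classical
  have H : ∀ s : Finset (Fin n), (∏ i ∈ s, x i ^ m i) ∈ Jd x j ^ (∑ i ∈ s, m i) := by
    intro s
    induction s using Finset.induction_on with
    | empty => simp [Ideal.one_eq_top]
    | @insert a s ha ih =>
      rw [Finset.prod_insert ha, Finset.sum_insert ha, pow_add]
      refine Ideal.mul_mem_mul ?_ ih
      by_cases h0 : m a = 0
      · simp [h0, Ideal.one_eq_top]
      · have hlt : (a : ℕ) < j := by
          by_contra h
          exact h0 (hm a (le_of_not_gt h))
        exact Ideal.pow_mem_pow (mem_Jd x hlt) _
  exact H Finset.univ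

lemma eval_mem (x : Fin n → R) {j k : ℕ} {K : Ideal R} {P : MvPolynomial (Fin n) R}
    (hP : P.IsHomogeneous k) (hU : UsesLt j P) (hK : ∀ m, MvPolynomial.coeff m P ∈ K) :
    MvPolynomial.eval x P ∈ K * Jd x j ^ k := by
  rw [MvPolynomial.eval_eq']
  refine Submodule.sum_mem _ fun m hm => ?_
  have hc : MvPolynomial.coeff m P ≠ 0 := MvPolynomial.mem_support_iff.mp hm
  have hdeg : ∑ i, m i = k := hom_iff.mp hP m hc
  rw [← hdeg]
  exact Ideal.mul_mem_mul (hK m) (prod_mem x j m fun i hi => hU m hc i hi)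

lemma eval_mem' (x : Fin n → R) {j k : ℕ} {P : MvPolynomial (Fin n) R}
    (hP : P.IsHomogeneous k) (hU : UsesLt j P) :
    MvPolynomial.eval x P ∈ Jd x j ^ k := by
  have h := eval_mem x hP hU (fun m => Submodule.mem_top)
  rwa [← Ideal.one_eq_top, one_mul] at h

lemma exists_poly (x : Fin n → R) (j : ℕ) :
    ∀ k, ∀ y ∈ Jd x j ^ k, ∃ P : MvPolynomial (Fin n) R,
      P.IsHomogeneous k ∧ UsesLt j P ∧ MvPolynomial.eval x P = y := by
  intro k
  induction k with
  | zero =>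
    intro y _
    refine ⟨MvPolynomial.C y, MvPolynomial.isHomogeneous_C _ _, ?_, MvPolynomial.eval_C _⟩
    intro m hm i _
    rw [MvPolynomial.coeff_C] at hm
    by_cases h : (0 : Fin n →₀ ℕ) = m
    · rw [← h]; rfl
    · rw [if_neg h] at hm; exact absurd rfl hm
  | succ k ih =>
    intro y hy
    rw [pow_succ] at hy
    refine Submodule.mul_induction_on hy ?_ ?_
    · intro a ha b hb
      obtain ⟨P, hP, hU, hE⟩ := ih a ha
      induction hb using Submodule.span_induction with
      | mem y' hy' =>
        obtain ⟨i, hij, rfl⟩ := hy'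
        refine ⟨P * MvPolynomial.X i, hP.mul (MvPolynomial.isHomogeneous_X _ _), ?_, by
          rw [map_mul, MvPolynomial.eval_X, hE]⟩
        classical
        intro m hm i' hi'
        rw [MvPolynomial.coeff_mul_X'] at hm
        rw [if_pos (by by_contra h; rw [if_neg h] at hm; exact hm rfl :
          i ∈ m.support)] at hm
        have h0 := hU _ hm i' hi'
        have hne : i ≠ i' := fun h => by
          rw [h] at hij; exact absurd hi' (not_le.mpr hij)
        rw [Finsupp.tsub_apply, Finsupp.single_apply, if_neg hne, tsub_zero] at h0
        exact h0
      | zero =>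
        exact ⟨0, MvPolynomial.isHomogeneous_zero _ _ _, fun m hm => absurd rfl hm, by simp⟩
      | add y₁ y₂ hy₁ hy₂ ih₁ ih₂ =>
        obtain ⟨Q₁, hQ₁, hU₁, hE₁⟩ := ih₁
        obtain ⟨Q₂, hQ₂, hU₂, hE₂⟩ := ih₂
        refine ⟨Q₁ + Q₂, hQ₁.add hQ₂, ?_, by rw [map_add, hE₁, hE₂, mul_add]⟩
        intro m hm i hi
        rcases (by by_contra h; push_neg at h
                   rw [MvPolynomial.coeff_add, h.1, h.2, add_zero] at hm; exact hm rfl :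
          MvPolynomial.coeff m Q₁ ≠ 0 ∨ MvPolynomial.coeff m Q₂ ≠ 0) with h | h
        · exact hU₁ m h i hi
        · exact hU₂ m h i hi
      | smul r y' hy' ih' =>
        obtain ⟨Q, hQ, hUQ, hEQ⟩ := ih'
        refine ⟨MvPolynomial.C r * Q, by simpa using (MvPolynomial.isHomogeneous_C _ r).mul hQ,
          ?_, by rw [map_mul, MvPolynomial.eval_C, hEQ, smul_eq_mul]; ring⟩
        intro m hm i hi
        rw [MvPolynomial.coeff_C_mul] at hm
        exact hUQ m (right_ne_zero_of_mul hm) i hi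
    · intro y₁ y₂ h₁ h₂
      obtain ⟨Q₁, hQ₁, hU₁, hE₁⟩ := h₁
      obtain ⟨Q₂, hQ₂, hU₂, hE₂⟩ := h₂
      refine ⟨Q₁ + Q₂, hQ₁.add hQ₂, ?_, by rw [map_add, hE₁, hE₂]⟩
      intro m hm i hi
      rcases (by by_contra h; push_neg at h
                 rw [MvPolynomial.coeff_add, h.1, h.2, add_zero] at hm; exact hm rfl :
        MvPolynomial.coeff m Q₁ ≠ 0 ∨ MvPolynomial.coeff m Q₂ ≠ 0) with h | h
      · exact hU₁ m h i hi
      · exact hU₂ m h i hi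


lemma Jd_zero (x : Fin n → R) : Jd x 0 = ⊥ := by
  unfold Jd
  rw [show {y | ∃ i : Fin n, (i : ℕ) < 0 ∧ x i = y} = (∅ : Set R) by ext y; simp,
    Ideal.span_empty]

lemma Jd_le_succ (x : Fin n → R) (j : ℕ) : Jd x j ≤ Jd x (j + 1) := by
  unfold Jd
  exact Ideal.span_mono fun y ⟨i, hi, h⟩ => ⟨i, Nat.lt_succ_of_lt hi, h⟩

lemma Jd_succ (x : Fin n → R) {j : ℕ} (hj : j < n) :
    Jd x (j + 1) = Jd x j ⊔ Ideal.span {x ⟨j, hj⟩} := by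
  unfold Jd
  rw [← Ideal.span_union]
  congr 1
  ext y
  constructor
  · rintro ⟨i, hi, rfl⟩
    rcases Nat.lt_succ_iff_lt_or_eq.mp hi with h | h
    · exact Or.inl ⟨i, h, rfl⟩
    · exact Or.inr (Set.mem_singleton_iff.mpr (by rw [show i = ⟨j, hj⟩ from Fin.ext h]))
  · rintro (⟨i, hi, rfl⟩ | h)
    · exact ⟨i, Nat.lt_succ_of_lt hi, rfl⟩
    · exact ⟨⟨j, hj⟩, Nat.lt_succ_self j, (Set.mem_singleton_iff.mp h).symm⟩

lemma pow_decomp (x : Fin n → R) {j : ℕ} (hj : j < n) :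
    ∀ k, Jd x (j + 1) ^ (k + 1) ≤
      Jd x j ^ (k + 1) ⊔ Ideal.span {x ⟨j, hj⟩} * Jd x (j + 1) ^ k := by
  intro k
  induction k with
  | zero =>
    rw [Jd_succ x hj]
    simp
  | succ k ih =>
    have hT : Ideal.span {x ⟨j, hj⟩} ≤ Jd x (j + 1) := by
      rw [Ideal.span_le, Set.singleton_subset_iff]
      exact mem_Jd x (Nat.lt_succ_self j)
    calc Jd x (j + 1) ^ (k + 2) = Jd x (j + 1) ^ (k + 1) * Jd x (j + 1) := pow_succ _ _
      _ ≤ (Jd x j ^ (k + 1) ⊔ Ideal.span {x ⟨j, hj⟩} * Jd x (j + 1) ^ k) *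
          (Jd x j ⊔ Ideal.span {x ⟨j, hj⟩}) := Ideal.mul_mono ih (Jd_succ x hj).le
      _ ≤ Jd x j ^ (k + 2) ⊔ Ideal.span {x ⟨j, hj⟩} * Jd x (j + 1) ^ (k + 1) := by
        rw [Ideal.sup_mul, Ideal.mul_sup, Ideal.mul_sup]
        refine sup_le (sup_le ?_ ?_) (sup_le ?_ ?_)
        · rw [← pow_succ]
          exact le_sup_left
        · rw [mul_comm]
          exact le_trans (Ideal.mul_mono le_rfl
            (Ideal.pow_right_mono (Jd_le_succ x j) (k + 1))) le_sup_right
        · rw [mul_assoc]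
          refine le_trans (Ideal.mul_mono le_rfl ?_) le_sup_right
          rw [pow_succ]
          exact Ideal.mul_mono le_rfl (Jd_le_succ x j)
        · rw [mul_assoc]
          refine le_trans (Ideal.mul_mono le_rfl ?_) le_sup_right
          rw [pow_succ]
          exact Ideal.mul_mono le_rfl hT

lemma mem_decomp (x : Fin n → R) {j : ℕ} (hj : j < n) {k : ℕ} {y : R}
    (hy : y ∈ Jd x (j + 1) ^ (k + 1)) :
    ∃ g ∈ Jd x j ^ (k + 1), ∃ h ∈ Jd x (j + 1) ^ k, y = g + x ⟨j, hj⟩ * h := by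
  have h1 := pow_decomp x hj k hy
  rw [Submodule.mem_sup] at h1
  obtain ⟨g, hg, z, hz, rfl⟩ := h1
  obtain ⟨h, hh, hzz⟩ := Ideal.mem_span_singleton_mul.mp hz
  exact ⟨g, hg, h, hh, by rw [hzz]⟩

lemma eq_C_of_support (P : MvPolynomial (Fin n) R)
    (h : ∀ m : Fin n →₀ ℕ, MvPolynomial.coeff m P ≠ 0 → m = 0) :
    P = MvPolynomial.C (MvPolynomial.coeff 0 P) := by
  ext m'
  rw [MvPolynomial.coeff_C]
  by_cases h0 : (0 : Fin n →₀ ℕ) = m'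
  · rw [if_pos h0, ← h0]
  · rw [if_neg h0]
    by_contra hc
    exact h0 (h m' hc).symm

lemma prev_eq (x : Fin n → R) (i : Fin n) : prevIdeal x i = Jd x (i : ℕ) := rfl


lemma key (x : Fin n → R) (hreg : IsRegularSeq x) :
    ∀ j, j ≤ n → ∀ k (P : MvPolynomial (Fin n) R), P.IsHomogeneous k → UsesLt j P →
      MvPolynomial.eval x P ∈ Jd x j ^ (k + 1) → ∀ m, MvPolynomial.coeff m P ∈ Jd x j := by
  intro j
  induction j with
  | zero =>
    intro _ k P hP hU hE m
    rw [Jd_zero] at hE ⊢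
    have hc : ∀ m' : Fin n →₀ ℕ, MvPolynomial.coeff m' P ≠ 0 → m' = 0 := fun m' h =>
      Finsupp.ext fun i => hU m' h i (Nat.zero_le _)
    have hPC := eq_C_of_support P hc
    rw [hPC, MvPolynomial.eval_C] at hE
    rw [← Ideal.zero_eq_bot, zero_pow (Nat.succ_ne_zero k)] at hE
    rw [Ideal.zero_eq_bot, Ideal.mem_bot] at hE
    rw [hPC, MvPolynomial.coeff_C]
    split
    · rw [hE]; exact Submodule.zero_mem _
    · exact Submodule.zero_mem _
  | succ j ihj =>
    intro hj1
    have hj : j < n := Nat.lt_of_lt_of_le (Nat.lt_succ_self j) hj1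
    have hkeyj := ihj (Nat.le_of_succ_le hj1)
    have hregt : ∀ r : R, x ⟨j, hj⟩ * r ∈ Jd x j → r ∈ Jd x j := by
      intro r hr
      have h := hreg ⟨j, hj⟩ r (by rw [prev_eq]; exact hr)
      rwa [prev_eq] at h
    have hcancel : ∀ m (z : R), x ⟨j, hj⟩ * z ∈ Jd x j ^ m → z ∈ Jd x j ^ m := by
      intro m
      induction m with
      | zero => intro z _; rw [pow_zero, Ideal.one_eq_top]; exact Submodule.mem_top
      | succ m ihm =>
        intro z hz
        have hz' : z ∈ Jd x j ^ m := ihm z (Ideal.pow_le_pow_right (Nat.le_succ m) hz)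
        obtain ⟨Q, hQ, hQU, hQE⟩ := exists_poly x j m z hz'
        have hcoef : ∀ d, MvPolynomial.coeff d Q ∈ Jd x j := by
          have hthom : (MvPolynomial.C (x ⟨j, hj⟩) * Q).IsHomogeneous m := by
            simpa using (MvPolynomial.isHomogeneous_C _ (x ⟨j, hj⟩)).mul hQ
          have htU : UsesLt j (MvPolynomial.C (x ⟨j, hj⟩) * Q) := by
            intro d hd i hi
            rw [MvPolynomial.coeff_C_mul] at hd
            exact hQU d (right_ne_zero_of_mul hd) i hi
          intro d
          have h := hkeyj m _ hthom htU
            (by rw [map_mul, MvPolynomial.eval_C, hQE]; exact hz) d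
          rw [MvPolynomial.coeff_C_mul] at h
          exact hregt _ h
        have h := eval_mem x hQ hQU hcoef
        rw [hQE] at h
        rw [pow_succ']
        exact h
    intro k
    induction k with
    | zero =>
      intro P hP hU hE m
      have hc : ∀ m' : Fin n →₀ ℕ, MvPolynomial.coeff m' P ≠ 0 → m' = 0 := fun m' h =>
        Finsupp.ext fun i =>
          Finset.sum_eq_zero_iff.mp (hom_iff.mp hP m' h) i (Finset.mem_univ i)
      have hPC := eq_C_of_support P hc
      rw [hPC, MvPolynomial.eval_C, zero_add, pow_one] at hE
      rw [hPC, MvPolynomial.coeff_C]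
      split
      · exact hE
      · exact Submodule.zero_mem _
    | succ k ihk =>
      intro P hP hU hE m
      classical
      set t : R := x ⟨j, hj⟩ with ht_def
      set s : Fin n →₀ ℕ := Finsupp.single ⟨j, hj⟩ 1 with hs
      set P₁ := MvPolynomial.divMonomial P s with hP₁def
      set P₀ := MvPolynomial.modMonomial P s with hP₀def
      have hsplit : (MvPolynomial.monomial s) 1 * P₁ + P₀ = P :=
        MvPolynomial.divMonomial_add_modMonomial P s
      have hsum_s : ∑ i, s i = 1 := by
        rw [hs]
        simp [Finsupp.single_apply]
      have hP₁hom : P₁.IsHomogeneous k := by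
        rw [hom_iff]
        intro d hd
        rw [hP₁def, MvPolynomial.coeff_divMonomial] at hd
        have h1 := hom_iff.mp hP (s + d) hd
        have hadd : ∑ i, (s + d) i = (∑ i, s i) + ∑ i, d i := by
          simp only [Finsupp.add_apply]
          rw [Finset.sum_add_distrib]
        rw [hadd, hsum_s] at h1
        omega
      have hP₀hom : P₀.IsHomogeneous (k + 1) := by
        rw [hom_iff]
        intro d hd
        rw [hP₀def] at hd
        have hne : MvPolynomial.coeff d P ≠ 0 := by
          by_cases hle : s ≤ d
          · rw [MvPolynomial.coeff_modMonomial_of_le _ hle] at hd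
            exact absurd rfl hd
          · rwa [MvPolynomial.coeff_modMonomial_of_not_le _ hle] at hd
        exact hom_iff.mp hP d hne
      have hU₁ : UsesLt (j + 1) P₁ := by
        intro d hd i hi
        rw [hP₁def, MvPolynomial.coeff_divMonomial] at hd
        have h1 := hU (s + d) hd i hi
        have h2 : s i + d i = 0 := by rw [← Finsupp.add_apply]; exact h1
        omega
      have hU₀ : UsesLt j P₀ := by
        intro d hd i hi
        rw [hP₀def] at hd
        have hnle : ¬ s ≤ d := fun hle => by
          rw [MvPolynomial.coeff_modMonomial_of_le _ hle] at hd; exact hd rfl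
        have hne : MvPolynomial.coeff d P ≠ 0 := by
          rwa [MvPolynomial.coeff_modMonomial_of_not_le _ hnle] at hd
        by_cases hij : i = ⟨j, hj⟩
        · have h1 : ¬ (1 : ℕ) ≤ d ⟨j, hj⟩ := fun h => hnle (by
            rw [hs]; exact Finsupp.single_le_iff.mpr h)
          rw [hij]
          omega
        · have h2 : (i : ℕ) ≠ j := fun h => hij (Fin.ext h)
          exact hU d hne i (by omega)
      have hevalmono : MvPolynomial.eval x ((MvPolynomial.monomial s) 1) = t := by
        rw [MvPolynomial.eval_monomial, hs, Finsupp.prod_single_index (by rw [pow_zero]),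
          pow_one, one_mul]
      have hevalsplit : MvPolynomial.eval x P
          = t * MvPolynomial.eval x P₁ + MvPolynomial.eval x P₀ := by
        conv_lhs => rw [← hsplit]
        rw [map_add, map_mul, hevalmono]
      have hw : MvPolynomial.eval x P₀ ∈ Jd x j ^ (k + 1) := eval_mem' x hP₀hom hU₀
      obtain ⟨g, hg, h, hh, hgh⟩ := mem_decomp x hj hE
      rw [← ht_def] at hgh
      have h5 : h - MvPolynomial.eval x P₁ ∈ Jd x j ^ (k + 1) := by
        apply hcancel
        have heq : t * (h - MvPolynomial.eval x P₁) = MvPolynomial.eval x P₀ - g := by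
          rw [hevalsplit] at hgh
          linear_combination -hgh
        rw [heq]
        exact Submodule.sub_mem _ hw (Ideal.pow_le_pow_right (Nat.le_succ _) hg)
      have h6 : MvPolynomial.eval x P₁ ∈ Jd x (j + 1) ^ (k + 1) := by
        have h5' : h - MvPolynomial.eval x P₁ ∈ Jd x (j + 1) ^ (k + 1) :=
          Ideal.pow_right_mono (Jd_le_succ x j) (k + 1) h5
        simpa using Submodule.sub_mem _ hh h5'
      have hc₁ : ∀ d, MvPolynomial.coeff d P₁ ∈ Jd x (j + 1) := ihk P₁ hP₁hom hU₁ h6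
      have ht' : t ∈ Jd x (j + 1) := mem_Jd x (Nat.lt_succ_self j)
      have h8 : t * MvPolynomial.eval x P₁ ∈ Jd x (j + 1) ^ (k + 2) := by
        have h81 : MvPolynomial.eval x P₁ ∈ Jd x (j + 1) * Jd x (j + 1) ^ k :=
          eval_mem x hP₁hom hU₁ hc₁
        have h82 := Ideal.mul_mem_mul ht' h81
        have heq : Jd x (j + 1) * (Jd x (j + 1) * Jd x (j + 1) ^ k)
            = Jd x (j + 1) ^ (k + 2) := by
          rw [← pow_succ', ← pow_succ']
        rwa [heq] at h82
      have hw2 : MvPolynomial.eval x P₀ ∈ Jd x (j + 1) ^ (k + 2) := by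
        have heq : MvPolynomial.eval x P₀
            = MvPolynomial.eval x P - t * MvPolynomial.eval x P₁ := by
          rw [hevalsplit]; ring
        rw [heq]
        exact Submodule.sub_mem _ hE h8
      obtain ⟨g', hg', h', hh', hgh'⟩ := mem_decomp x hj hw2
      rw [← ht_def] at hgh'
      have h9 : h' ∈ Jd x j ^ (k + 1) := by
        apply hcancel
        have heq : t * h' = MvPolynomial.eval x P₀ - g' := by
          rw [hgh']; ring
        rw [heq]
        exact Submodule.sub_mem _ hw (Ideal.pow_le_pow_right (Nat.le_succ _) hg')
      obtain ⟨U, hUhom, hUU, hUE⟩ := exists_poly x j (k + 1) h' h9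
      set P₂ := P₀ - MvPolynomial.C t * U with hP₂def
      have hP₂hom : P₂.IsHomogeneous (k + 1) := by
        rw [hom_iff]
        intro d hd
        rw [hP₂def, MvPolynomial.coeff_sub, MvPolynomial.coeff_C_mul] at hd
        by_cases h0 : MvPolynomial.coeff d P₀ ≠ 0
        · exact hom_iff.mp hP₀hom d h0
        · push_neg at h0
          rw [h0, zero_sub, neg_ne_zero] at hd
          exact hom_iff.mp hUhom d (right_ne_zero_of_mul hd)
      have hP₂U : UsesLt j P₂ := by
        intro d hd i hi
        rw [hP₂def, MvPolynomial.coeff_sub, MvPolynomial.coeff_C_mul] at hd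
        by_cases h0 : MvPolynomial.coeff d P₀ ≠ 0
        · exact hU₀ d h0 i hi
        · push_neg at h0
          rw [h0, zero_sub, neg_ne_zero] at hd
          exact hUU d (right_ne_zero_of_mul hd) i hi
      have hP₂E : MvPolynomial.eval x P₂ ∈ Jd x j ^ (k + 2) := by
        have heq : MvPolynomial.eval x P₂ = g' := by
          rw [hP₂def, map_sub, map_mul, MvPolynomial.eval_C, hUE]
          linear_combination hgh'
        rw [heq]
        exact hg'
      have hc₂ := hkeyj (k + 1) P₂ hP₂hom hP₂U hP₂E
      have hc₀ : ∀ d, MvPolynomial.coeff d P₀ ∈ Jd x (j + 1) := by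
        intro d
        have h1 := hc₂ d
        rw [hP₂def, MvPolynomial.coeff_sub, MvPolynomial.coeff_C_mul] at h1
        have h2 : MvPolynomial.coeff d P₀
            = (MvPolynomial.coeff d P₀ - t * MvPolynomial.coeff d U)
              + t * MvPolynomial.coeff d U := by ring
        rw [h2]
        exact Submodule.add_mem _ (Jd_le_succ x j h1)
          (Ideal.mul_mem_right _ _ ht')
      rw [← hsplit, MvPolynomial.coeff_add, MvPolynomial.coeff_monomial_mul']
      split
      · rw [one_mul]
        exact Submodule.add_mem _ (hc₁ _) (hc₀ _)
      · rw [zero_add]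
        exact hc₀ m

end QuasiRegAux

/-- A regular sequence is quasi-regular: the natural surjection from the degree-`k`
homogeneous polynomials over `R/I` onto `I^k/I^(k+1)` (sending `X_i` to the class of `x_i`)
is an isomorphism, so `I^k/I^(k+1)` is a free `R/I`-module. -/
theorem quasiRegular_of_regular
    {R : Type*} [CommRing R] {n : ℕ} (x : Fin n → R) (hreg : IsRegularSeq x)
    (I : Ideal R) (hI : I = Ideal.span (Set.range x)) (k : ℕ) :
    -- surjectivity: every element of I^k is the value of a homogeneous degree-k polynomial
    -- modulo I^(k+1)
    (∀ y ∈ I ^ k, ∃ P : MvPolynomial (Fin n) R, P.IsHomogeneous k ∧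
      MvPolynomial.eval x P - y ∈ I ^ (k + 1)) ∧
    -- injectivity: a homogeneous degree-k polynomial whose value lies in I^(k+1) has all
    -- coefficients in I
    (∀ P : MvPolynomial (Fin n) R, P.IsHomogeneous k →
      MvPolynomial.eval x P ∈ I ^ (k + 1) → ∀ m, MvPolynomial.coeff m P ∈ I) := by
  have hIn : I = QuasiRegAux.Jd x n := by
    rw [hI]
    unfold QuasiRegAux.Jd
    congr 1
    ext y
    constructor
    · rintro ⟨i, rfl⟩
      exact ⟨i, i.isLt, rfl⟩
    · rintro ⟨i, _, rfl⟩
      exact ⟨i, rfl⟩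
  constructor
  · intro y hy
    rw [hIn] at hy
    obtain ⟨P, hP, -, hE⟩ := QuasiRegAux.exists_poly x n k y hy
    exact ⟨P, hP, by rw [hE, sub_self]; exact Submodule.zero_mem _⟩
  · intro P hP hE m
    rw [hIn] at hE ⊢
    exact QuasiRegAux.key x hreg n le_rfl k P hP
      (fun m' _ i hi => absurd i.isLt (not_lt.mpr hi)) hE m
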